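/- Every locally compact Hausdorff space X satisfies w(X) ≤ max(|X|, ℵ₀) — in particular, an infinite locally compact Hausdorff space X satisfies w(X) ≤ |X|. -/

import Mathlib

open TopologicalSpace Cardinal

lemma aux_mk_finset_le (α : Type*) : Cardinal.mk (Finset α) ≤ max (Cardinal.mk α) Cardinal.aleph0 := by
  cases finite_or_infinite α
  · haveI := Fintype.ofFinite α
    exact le_trans Cardinal.mk_le_aleph0 (le_max_right _ _)
  · rw [Cardinal.mk_finset_of_infinite]
    exact le_max_left _ _

lemma aux_mk_prod_le (α : Type u) : max (Cardinal.mk (α × α)) Cardinal.aleph0 ≤ max (Cardinal.mk α) Cardinal.aleph0 := by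
  refine max_le ?_ (le_max_right _ _)
  calc Cardinal.mk (α × α) = Cardinal.mk α * Cardinal.mk α := by
        simp [Cardinal.mk_prod]
    _ ≤ max (Cardinal.mk α) Cardinal.aleph0 * max (Cardinal.mk α) Cardinal.aleph0 :=
        mul_le_mul' (le_max_left _ _) (le_max_left _ _)
    _ = max (Cardinal.mk α) Cardinal.aleph0 := Cardinal.mul_eq_self (le_max_right _ _)

lemma exists_basis_compact (Y : Type*) [TopologicalSpace Y] [CompactSpace Y] [T2Space Y] :
    ∃ B : Set (Set Y), IsTopologicalBasis B ∧ Cardinal.mk B ≤ max (Cardinal.mk Y) Cardinal.aleph0 := by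
  classical
  choose U V hUopen hVopen hxU hyV hdisj using
    fun (p : {p : Y × Y // p.1 ≠ p.2}) => t2_separation p.2
  set U' : Y × Y → Set Y := fun p => if h : p.1 ≠ p.2 then U ⟨p, h⟩ else Set.univ with hU'
  set f : Finset (Y × Y) → Set Y := fun s => ⋂ p ∈ s, U' p with hf
  refine ⟨Set.range f, ?_, le_trans Cardinal.mk_range_le (le_trans (le_trans (aux_mk_finset_le _) (le_refl _)) (aux_mk_prod_le _))⟩
  apply isTopologicalBasis_of_isOpen_of_nhds
  · rintro _ ⟨s, rfl⟩
    refine isOpen_biInter_finset fun p _ => ?_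
    by_cases h : p.1 ≠ p.2
    · simp only [hU', dif_pos h]; exact hUopen _
    · simp only [hU', dif_neg h]; exact isOpen_univ
  · intro x W hxW hW
    have hK : IsCompact Wᶜ := hW.isClosed_compl.isCompact
    have hne : ∀ y ∈ Wᶜ, (x, y).1 ≠ (x, y).2 := fun y hy h => hy (show y ∈ W by rw [← show x = y from h]; exact hxW)
    obtain ⟨t, ht⟩ := hK.elim_nhds_subcover' (fun y hy => V ⟨(x, y), hne y hy⟩)
      (fun y hy => (hVopen _).mem_nhds (hyV ⟨(x, y), hne y hy⟩))
    refine ⟨f (t.image fun y => (x, y.1)), ⟨_, rfl⟩, ?_, ?_⟩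
    · simp only [hf, Set.mem_iInter, Finset.mem_image]
      rintro p ⟨y, hy, rfl⟩
      simp only [hU', dif_pos (hne y.1 y.2)]
      exact hxU _
    · intro z hz
      by_contra hzW
      obtain ⟨y, hyt, hzy⟩ := Set.mem_iUnion₂.1 (ht hzW)
      have hzU : z ∈ U ⟨(x, y.1), hne y.1 y.2⟩ := by
        have := Set.mem_iInter₂.1 hz (x, y.1) (Finset.mem_image_of_mem _ hyt)
        simpa only [hU', dif_pos (hne y.1 y.2)] using this
      exact (hdisj ⟨(x, y.1), hne y.1 y.2⟩).le_bot ⟨hzU, hzy⟩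

/-- The weight of a topological space: the minimal cardinality of a basis. -/
noncomputable def weight (X : Type*) [TopologicalSpace X] : Cardinal :=
  ⨅ B : {B : Set (Set X) // IsTopologicalBasis B}, Cardinal.mk B.1

theorem weight_le_of_locallyCompact (X : Type*) [TopologicalSpace X]
    [LocallyCompactSpace X] [T2Space X] :
    weight X ≤ max (Cardinal.mk X) Cardinal.aleph0 ∧
      (Infinite X → weight X ≤ Cardinal.mk X) := by
  have key : weight X ≤ max (Cardinal.mk X) Cardinal.aleph0 := by
    obtain ⟨B, hB, hcard⟩ := exists_basis_compact (OnePoint X)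
    have hB' : IsTopologicalBasis ((Set.preimage ((↑) : X → OnePoint X)) '' B) :=
      hB.isInducing (OnePoint.isOpenEmbedding_coe).toIsInducing
    have h1 : weight X ≤ Cardinal.mk ((Set.preimage ((↑) : X → OnePoint X)) '' B) :=
      ciInf_le (OrderBot.bddBelow _) (⟨_, hB'⟩ : {B : Set (Set X) // IsTopologicalBasis B})
    refine h1.trans ((Cardinal.mk_image_le).trans (hcard.trans ?_))
    refine max_le ?_ (le_max_right _ _)
    have hop : Cardinal.mk (OnePoint X) = Cardinal.mk X + 1 := Cardinal.mk_option
    rw [hop]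
    calc Cardinal.mk X + 1 ≤ max (Cardinal.mk X) Cardinal.aleph0 + max (Cardinal.mk X) Cardinal.aleph0 :=
          add_le_add (le_max_left _ _) (le_trans Cardinal.one_le_aleph0 (le_max_right _ _))
      _ = max (Cardinal.mk X) Cardinal.aleph0 := Cardinal.add_eq_self (le_max_right _ _)
  refine ⟨key, fun h => ?_⟩
  rwa [max_eq_left (Cardinal.aleph0_le_mk X)] at key
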